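/- For nonnegative integers $a$ and $|z| < 1$, $|q| < 1$ (or as formal power series in $z$): $\sum_{k=0}^\infty z^k \begin{bmatrix} a - 1 + k \\ k \end{bmatrix}_q = \frac{1}{(z; q)_a}$, where $\begin{bmatrix} n \\ k \end{bmatrix}_q$ is the Gaussian binomial coefficient and $(z;q)_a = \prod_{i=0}^{a-1}(1 - z q^i)$. -/

import Mathlib

open Finset PowerSeries

/-- Finite `q`-Pochhammer symbol `(x; q)_n = ∏_{i=0}^{n-1} (1 - x q^i)` in the field
of rational functions. -/
noncomputable def qPoch (x q : RatFunc ℚ) (n : ℕ) : RatFunc ℚ :=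
  ∏ i ∈ Finset.range n, (1 - x * q ^ i)

/-- The Gaussian binomial coefficient `[n k]_q = (q;q)_n / ((q;q)_k (q;q)_{n-k})`,
with `q` the indeterminate of `RatFunc ℚ`. -/
noncomputable def gaussBinom (n k : ℕ) : RatFunc ℚ :=
  if k ≤ n then
    qPoch RatFunc.X RatFunc.X n /
      (qPoch RatFunc.X RatFunc.X k * qPoch RatFunc.X RatFunc.X (n - k))
  else 0

lemma one_sub_X_pow_ne_zero (n : ℕ) : (1 : RatFunc ℚ) - RatFunc.X ^ (n + 1) ≠ 0 := by
  have hp : ((1 : Polynomial ℚ) - Polynomial.X ^ (n + 1)) ≠ 0 := by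
    intro h
    have := congrArg (Polynomial.eval 0) h
    simp at this
  have : (1 : RatFunc ℚ) - RatFunc.X ^ (n + 1) =
      algebraMap (Polynomial ℚ) (RatFunc ℚ) (1 - Polynomial.X ^ (n + 1)) := by
    simp [map_sub, map_pow, RatFunc.algebraMap_X]
  rw [this]
  exact fun h => hp (RatFunc.algebraMap_injective ℚ (by simpa using h))

lemma qPoch_ne_zero (n : ℕ) : qPoch RatFunc.X RatFunc.X n ≠ 0 := by
  unfold qPoch
  apply Finset.prod_ne_zero_iff.mpr
  intro i _
  have := one_sub_X_pow_ne_zero i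
  rwa [pow_succ'] at this

lemma qPoch_succ (n : ℕ) : qPoch RatFunc.X RatFunc.X (n + 1) =
    qPoch RatFunc.X RatFunc.X n * (1 - RatFunc.X ^ (n + 1)) := by
  rw [qPoch, Finset.prod_range_succ, ← pow_succ']
  rfl

lemma qPoch_zero : qPoch RatFunc.X RatFunc.X 0 = 1 := by simp [qPoch]

lemma gaussBinom_zero (n : ℕ) : gaussBinom n 0 = 1 := by
  simp [gaussBinom, qPoch_zero, div_self (mul_ne_zero (qPoch_ne_zero 0) (qPoch_ne_zero n)),
    qPoch_ne_zero]

lemma gaussBinom_self (n : ℕ) : gaussBinom n n = 1 := by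
  simp [gaussBinom, qPoch_zero, div_self (qPoch_ne_zero n), qPoch_ne_zero]

lemma gaussBinom_of_lt {n k : ℕ} (h : n < k) : gaussBinom n k = 0 := by
  simp [gaussBinom, Nat.not_le.mpr h]

lemma pascal (a k : ℕ) : gaussBinom (a + k + 1) (k + 1) =
    gaussBinom (a + k) (k + 1) + RatFunc.X ^ a * gaussBinom (a + k) k := by
  rcases a with _ | b
  · simp [gaussBinom_self, gaussBinom_of_lt (Nat.lt_succ_self k)]
  · have h1 : k + 1 ≤ b + 1 + k + 1 := by omega
    have h2 : k + 1 ≤ b + 1 + k := by omega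
    have h3 : k ≤ b + 1 + k := by omega
    rw [gaussBinom, gaussBinom, gaussBinom, if_pos h1, if_pos h2, if_pos h3]
    have e1 : b + 1 + k + 1 - (k + 1) = b + 1 := by omega
    have e2 : b + 1 + k - (k + 1) = b := by omega
    have e3 : b + 1 + k - k = b + 1 := by omega
    rw [e1, e2, e3]
    have hb : b + 1 + k + 1 = (b + k + 1) + 1 := by omega
    have hb2 : b + 1 + k = (b + k) + 1 := by omega
    rw [hb, hb2, qPoch_succ (b + k + 1), qPoch_succ (b + k), qPoch_succ b, qPoch_succ k]
    have nk := qPoch_ne_zero k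
    have nb := qPoch_ne_zero b
    have n1 := one_sub_X_pow_ne_zero k
    have n2 := one_sub_X_pow_ne_zero b
    field_simp
    ring

lemma step (a : ℕ) :
    (PowerSeries.mk fun k => gaussBinom (a + 1 + k - 1) k : PowerSeries (RatFunc ℚ)) *
      (1 - PowerSeries.C (RatFunc.X ^ a : RatFunc ℚ) * PowerSeries.X) =
      (PowerSeries.mk fun k => gaussBinom (a + k - 1) k) := by
  ext n
  rw [mul_sub, mul_one, map_sub]
  rcases n with _ | k
  · simp [gaussBinom_zero]
  · have hx : (PowerSeries.mk fun k => gaussBinom (a + 1 + k - 1) k : PowerSeries (RatFunc ℚ)) *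
        (PowerSeries.C (RatFunc.X ^ a : RatFunc ℚ) * PowerSeries.X) =
        PowerSeries.C (RatFunc.X ^ a : RatFunc ℚ) *
          ((PowerSeries.mk fun k => gaussBinom (a + 1 + k - 1) k) * PowerSeries.X) := by ring
    rw [hx, PowerSeries.coeff_C_mul, PowerSeries.coeff_succ_mul_X]
    simp only [PowerSeries.coeff_mk]
    have e1 : a + 1 + (k + 1) - 1 = a + k + 1 := by omega
    have e2 : a + 1 + k - 1 = a + k := by omega
    have e3 : a + (k + 1) - 1 = a + k := by omega
    rw [e1, e2, e3, pascal]
    ring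

theorem stmt16 (a : ℕ) :
    (PowerSeries.mk fun k => gaussBinom (a + k - 1) k : PowerSeries (RatFunc ℚ)) =
      (∏ i ∈ Finset.range a,
        (1 - PowerSeries.C (RatFunc.X ^ i : RatFunc ℚ) * PowerSeries.X))⁻¹ := by
  have hconst : (constantCoeff (R := RatFunc ℚ))
      (∏ i ∈ Finset.range a, (1 - PowerSeries.C (RatFunc.X ^ i : RatFunc ℚ) * PowerSeries.X))
      ≠ 0 := by
    rw [map_prod]
    apply Finset.prod_ne_zero_iff.mpr
    intro i _
    simp
  rw [PowerSeries.eq_inv_iff_mul_eq_one hconst]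
  induction a with
  | zero =>
    simp only [Finset.range_zero, Finset.prod_empty, mul_one]
    ext n
    rcases n with _ | k
    · simp [gaussBinom_zero]
    · simp [PowerSeries.coeff_one, gaussBinom_of_lt (Nat.lt_succ_self k)]
  | succ b ih =>
    rw [Finset.prod_range_succ, ← mul_assoc, mul_right_comm, step b]
    apply ih
    rw [map_prod]
    apply Finset.prod_ne_zero_iff.mpr
    intro i _
    simp
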